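/- arXiv:2010.05900 — 3 statements merged into one kernel-verified Lean document; each statement's English description precedes it below -/
import Mathlib

section
/- Let Ω be a finite probability space with measure P, let E ⊆ Ω be an event, and let S ⊆ E × Ω be a relation such that (1) for every ω ∈ E, the set {ω' : (ω,ω') ∈ S} has at least a elements, (2) for every (ω,ω') ∈ S, P({ω}) ≤ C · P({ω'}), and (3) for every ω' ∈ Ω, the set {ω ∈ E : (ω,ω') ∈ S} has at most b elements. Then P(E) ≤ C·b/a. -/
open Finset

/-- **Abstract double-counting bound.** Let `Ω` be a finite probability space with
probability mass function `P`, `E` an event and `S ⊆ E × Ω` a relation such that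
every `ω ∈ E` has at least `a` partners, `P` increases by at most a factor `C`
along `S`, and every `ω'` has at most `b` preimages in `E`.  Then `P(E) ≤ C·b/a`. -/
theorem stmt0 {Ω : Type*} [Fintype Ω] [DecidableEq Ω]
    (P : Ω → ℝ) (hP0 : ∀ ω, 0 ≤ P ω) (hP1 : ∑ ω, P ω = 1)
    (E : Finset Ω) (S : Finset (Ω × Ω))
    (hSE : ∀ q ∈ S, q.1 ∈ E)
    (a b C : ℝ) (ha : 0 < a) (hb : 0 < b) (hC : 0 < C)
    (h1 : ∀ ω ∈ E, a ≤ ((Finset.univ.filter (fun ω' => (ω, ω') ∈ S)).card : ℝ))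
    (h2 : ∀ q ∈ S, P q.1 ≤ C * P q.2)
    (h3 : ∀ ω' : Ω, ((E.filter (fun ω => (ω, ω') ∈ S)).card : ℝ) ≤ b) :
    ∑ ω ∈ E, P ω ≤ C * b / a := by
  have hsub : S ⊆ E ×ˢ Finset.univ := by
    intro q hq
    simp [Finset.mem_product, hSE q hq]
  have key : ∀ f : Ω × Ω → ℝ,
      ∑ q ∈ S, f q = ∑ q ∈ E ×ˢ Finset.univ, if q ∈ S then f q else 0 := by
    intro f
    rw [Finset.sum_ite_mem, Finset.inter_eq_right.2 hsub]
  have key1 : ∑ q ∈ S, P q.1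
      = ∑ ω ∈ E, ((Finset.univ.filter (fun ω' => (ω, ω') ∈ S)).card : ℝ) * P ω := by
    rw [key, Finset.sum_product]
    refine Finset.sum_congr rfl fun ω _ => ?_
    rw [← Finset.sum_filter]; simp [Finset.sum_const, mul_comm]
  have key2 : ∑ q ∈ S, P q.2
      = ∑ ω' : Ω, ((E.filter (fun ω => (ω, ω') ∈ S)).card : ℝ) * P ω' := by
    rw [key, Finset.sum_product_right]
    refine Finset.sum_congr rfl fun ω' _ => ?_
    rw [← Finset.sum_filter]; simp [Finset.sum_const, mul_comm]
  have step1 : a * ∑ ω ∈ E, P ω ≤ ∑ q ∈ S, P q.1 := by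
    rw [key1, Finset.mul_sum]
    exact Finset.sum_le_sum fun ω hω =>
      mul_le_mul_of_nonneg_right (h1 ω hω) (hP0 ω)
  have step2 : ∑ q ∈ S, P q.1 ≤ C * ∑ q ∈ S, P q.2 := by
    rw [Finset.mul_sum]
    exact Finset.sum_le_sum h2
  have step3 : ∑ q ∈ S, P q.2 ≤ b := by
    rw [key2]
    calc ∑ ω' : Ω, ((E.filter (fun ω => (ω, ω') ∈ S)).card : ℝ) * P ω'
        ≤ ∑ ω' : Ω, b * P ω' :=
          Finset.sum_le_sum fun ω' _ =>
            mul_le_mul_of_nonneg_right (h3 ω') (hP0 ω')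
      _ = b := by rw [← Finset.mul_sum, hP1, mul_one]
  rw [le_div_iff₀ ha, mul_comm]
  calc a * ∑ ω ∈ E, P ω ≤ C * ∑ q ∈ S, P q.2 := step1.trans step2
    _ ≤ C * b := by nlinarith
end

section
/- In the Lorentz mirror model on the cylinder ℤ × (ℤ/2nℤ) restricted to the strip {0,...,N+1} × (ℤ/2nℤ), for any fixed mirror configuration, the number of left-right trajectories (trajectories entering at section x=0 moving rightward and exiting at section x=N+1 moving rightward) is even. -/
/-- A mirror state at a site: `none` = no mirror, `some true` = NW mirror,
`some false` = NE mirror. -/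
abbrev Mirror := Option Bool

/-- The reflection rule for a light ray travelling in direction `d`: it continues
straight at an empty site and is reflected along the corresponding diagonal by a
(two-sided) NW or NE mirror. -/
def reflect : Mirror → ℤ × ℤ → ℤ × ℤ
  | none, d => d
  | some true, d => (d.2, d.1)
  | some false, d => (-d.2, -d.1)

/-- One step of the light dynamics on the cylinder `ℤ × (ℤ/wℤ)` with mirror
configuration `cfg`.  A state `(v, d)` means the light has just left vertex `v`
moving in direction `d` (i.e. it is crossing the directed edge `(v, v + d)`);
it arrives at `v + d` and is reflected according to the mirror there. -/
def stepC (w : ℕ) (cfg : ℤ × ZMod w → Mirror)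
    (s : (ℤ × ZMod w) × (ℤ × ℤ)) : (ℤ × ZMod w) × (ℤ × ℤ) :=
  let v : ℤ × ZMod w := (s.1.1 + s.2.1, s.1.2 + (s.2.2 : ZMod w))
  (v, reflect (cfg v) s.2)

/-- `LRat n N cfg y` says that the light entering the strip `{1,…,N} × (ℤ/2nℤ)` through
the directed edge `((0,y),(1,y))` (moving rightward) stays in the strip and eventually
exits through a directed edge `((N,y'),(N+1,y'))`, i.e. it is a left–right trajectory. -/
def LRat (n N : ℕ) (cfg : ℤ × ZMod (2*n) → Mirror) (y : ZMod (2*n)) : Prop :=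
  ∃ k : ℕ,
    (((stepC (2*n) cfg)^[k+1] (((0 : ℤ), y), ((1 : ℤ), (0 : ℤ)))).1.1 = (N : ℤ) + 1) ∧
    ∀ i : ℕ, 1 ≤ i → i ≤ k →
      1 ≤ ((stepC (2*n) cfg)^[i] (((0 : ℤ), y), ((1 : ℤ), (0 : ℤ)))).1.1 ∧
      ((stepC (2*n) cfg)^[i] (((0 : ℤ), y), ((1 : ℤ), (0 : ℤ)))).1.1 ≤ (N : ℤ)

namespace Stmt4Aux

def isDir (d : ℤ × ℤ) : Prop := d = (1,0) ∨ d = (-1,0) ∨ d = (0,1) ∨ d = (0,-1)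

lemma reflect_reflect (m : Mirror) (d : ℤ × ℤ) : reflect m (reflect m d) = d := by
  rcases m with _ | b
  · rfl
  · cases b <;> simp [reflect]

lemma reflect_neg (m : Mirror) (d : ℤ × ℤ) : reflect m (-d) = -(reflect m d) := by
  rcases m with _ | b
  · rfl
  · cases b <;> simp [reflect]

lemma reflect_isDir (m : Mirror) {d : ℤ × ℤ} (h : isDir d) : isDir (reflect m d) := by
  rcases m with _ | b
  · exact h
  · cases b <;> rcases h with h | h | h | h <;> subst h <;> simp [reflect, isDir]

lemma reflect_ne_neg (m : Mirror) {d : ℤ × ℤ} (h : isDir d) : reflect m d ≠ -d := by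
  rcases m with _ | b
  · rcases h with h | h | h | h <;> subst h <;> decide
  · cases b <;> rcases h with h | h | h | h <;> subst h <;> decide

variable {w : ℕ} {cfg : ℤ × ZMod w → Mirror}

def invStep (w : ℕ) (cfg : ℤ × ZMod w → Mirror)
    (s : (ℤ × ZMod w) × (ℤ × ℤ)) : (ℤ × ZMod w) × (ℤ × ℤ) :=
  let d := reflect (cfg s.1) s.2
  ((s.1.1 - d.1, s.1.2 - (d.2 : ZMod w)), d)

lemma invStep_stepC (s : (ℤ × ZMod w) × (ℤ × ℤ)) :
    invStep w cfg (stepC w cfg s) = s := by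
  simp only [stepC, invStep, reflect_reflect]
  ext <;> simp <;> ring

lemma stepC_injective : Function.Injective (stepC w cfg) :=
  Function.LeftInverse.injective (g := invStep w cfg) (fun s => invStep_stepC s)

/-- The reversal map on states. -/
def RR (w : ℕ) (s : (ℤ × ZMod w) × (ℤ × ℤ)) : (ℤ × ZMod w) × (ℤ × ℤ) :=
  ((s.1.1 + s.2.1, s.1.2 + (s.2.2 : ZMod w)), -s.2)

lemma step_RR_step (s : (ℤ × ZMod w) × (ℤ × ℤ)) :
    stepC w cfg (RR w (stepC w cfg s)) = RR w s := by
  simp only [stepC, RR]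
  have h1 : ∀ a b : ℤ, a + b + -b = a := fun a b => by ring
  ext
  · simp
  · simp only [Prod.snd_neg, Int.cast_neg]; ring
  · simp [reflect_neg, reflect_reflect]
  · simp [reflect_neg, reflect_reflect]

lemma iter_RR_iter (k : ℕ) (s : (ℤ × ZMod w) × (ℤ × ℤ)) :
    (stepC w cfg)^[k] (RR w ((stepC w cfg)^[k] s)) = RR w s := by
  induction k generalizing s with
  | zero => rfl
  | succ k ih =>
      rw [Function.iterate_succ_apply, Function.iterate_succ_apply']
      rw [step_RR_step]
      exact ih s


section
variable (n : ℕ) (cfg : ℤ × ZMod (2*n) → Mirror)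

def s0 (y : ZMod (2*n)) : (ℤ × ZMod (2*n)) × (ℤ × ℤ) := (((0:ℤ), y), ((1:ℤ), (0:ℤ)))

def traj (y : ZMod (2*n)) (k : ℕ) : (ℤ × ZMod (2*n)) × (ℤ × ℤ) :=
  (stepC (2*n) cfg)^[k] (s0 n y)

def X (y : ZMod (2*n)) (k : ℕ) : ℤ := (traj n cfg y k).1.1

lemma traj_succ (y : ZMod (2*n)) (k : ℕ) :
    traj n cfg y (k+1) = stepC (2*n) cfg (traj n cfg y k) := by
  rw [traj, Function.iterate_succ_apply']; rfl

lemma isDir_traj (y : ZMod (2*n)) (k : ℕ) : isDir (traj n cfg y k).2 := by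
  induction k with
  | zero => left; rfl
  | succ k ih =>
      rw [traj_succ]
      exact reflect_isDir _ ih

lemma X_succ (y : ZMod (2*n)) (k : ℕ) :
    X n cfg y (k+1) = X n cfg y k + (traj n cfg y k).2.1 := by
  rw [X, traj_succ]; rfl

lemma claimB {z y : ZMod (2*n)} {m : ℕ}
    (h : s0 n z = RR (2*n) (traj n cfg y m)) {i : ℕ} (him : i ≤ m) :
    traj n cfg z i = RR (2*n) (traj n cfg y (m - i)) := by
  have h1 : traj n cfg y m = (stepC (2*n) cfg)^[i] (traj n cfg y (m - i)) := by
    rw [traj, traj, ← Function.iterate_add_apply]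
    congr 1
    omega
  rw [traj, h, h1, iter_RR_iter]

lemma claimA {y : ZMod (2*n)} {m : ℕ} (h1 : (traj n cfg y m).1.1 = 1)
    (h2 : (traj n cfg y m).2 = (-1, 0)) :
    s0 n ((traj n cfg y (m+1)).1.2) = RR (2*n) (traj n cfg y m) := by
  rw [traj_succ]
  simp [stepC, RR, s0, h1, h2]

lemma claimD {z y : ZMod (2*n)} {m : ℕ}
    (h : traj n cfg z m = RR (2*n) (s0 n y)) :
    (traj n cfg z (m+1)).1.1 = 0 ∧ (traj n cfg z (m+1)).1.2 = y := by
  rw [traj_succ, h]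
  simp [stepC, RR, s0]

lemma noFixEven {s : (ℤ × ZMod (2*n)) × (ℤ × ℤ)} (hd : isDir s.2)
    (h : s = RR (2*n) s) : False := by
  have h2 : s.2 = -s.2 := congrArg Prod.snd h
  rcases hd with h' | h' | h' | h' <;> rw [h'] at h2 <;> exact absurd h2 (by decide)

lemma noFixOdd {s : (ℤ × ZMod (2*n)) × (ℤ × ℤ)} (hd : isDir s.2)
    (h : s = RR (2*n) (stepC (2*n) cfg s)) : False := by
  have h2 : s.2 = -(reflect (cfg ((stepC (2*n) cfg s).1)) s.2) := congrArg Prod.snd h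
  have h3 : reflect (cfg ((stepC (2*n) cfg s).1)) s.2 = -s.2 := by
    have := congrArg Neg.neg h2
    rw [neg_neg] at this
    exact this.symm
  exact reflect_ne_neg _ hd h3

end




lemma exists_exit (n N : ℕ) (cfg : ℤ × ZMod (2*n) → Mirror) (hn : 0 < n)
    (y : ZMod (2*n)) :
    ∃ k : ℕ, 1 ≤ k ∧ ¬(1 ≤ X n cfg y k ∧ X n cfg y k ≤ (N:ℤ)) := by
  haveI : NeZero (2*n) := ⟨by omega⟩
  by_contra hc
  push_neg at hc
  have hin : ∀ k : ℕ, 1 ≤ k → 1 ≤ X n cfg y k ∧ X n cfg y k ≤ (N:ℤ) := hc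
  -- the set of possible states is finite
  set S : Set ((ℤ × ZMod (2*n)) × (ℤ × ℤ)) :=
    (Set.Icc (1:ℤ) (N:ℤ) ×ˢ (Set.univ : Set (ZMod (2*n)))) ×ˢ
      ({((1:ℤ),(0:ℤ)), (-1,0), (0,1), (0,-1)} : Set (ℤ × ℤ)) with hS
  have hfin : S.Finite :=
    (((Set.finite_Icc _ _).prod Set.finite_univ).prod (Set.toFinite _))
  haveI := hfin.to_subtype
  have hmem : ∀ k : ℕ, traj n cfg y (k+1) ∈ S := by
    intro k
    refine ⟨⟨hin (k+1) (by omega), trivial⟩, ?_⟩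
    rcases isDir_traj n cfg y (k+1) with h | h | h | h <;> rw [h] <;> simp
  obtain ⟨i, j, hne, hij⟩ :=
    Finite.exists_ne_map_eq_of_infinite (fun k : ℕ => (⟨traj n cfg y (k+1), hmem k⟩ : S))
  have hij' : traj n cfg y (i+1) = traj n cfg y (j+1) := by
    simpa using congrArg Subtype.val hij
  have key : ∀ a b : ℕ, a < b → traj n cfg y (a+1) = traj n cfg y (b+1) → False := by
    intro a b hab heq
    have h2 : (stepC (2*n) cfg)^[a+1] ((stepC (2*n) cfg)^[b-a] (s0 n y)) =
        (stepC (2*n) cfg)^[a+1] (s0 n y) := by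
      rw [← Function.iterate_add_apply]
      have h3 : (a+1) + (b-a) = b+1 := by omega
      rw [h3]
      exact heq.symm
    have h4 : (stepC (2*n) cfg)^[b-a] (s0 n y) = s0 n y :=
      (stepC_injective.iterate (a+1)) h2
    have h5 : X n cfg y (b-a) = 0 := by
      rw [X, traj, h4]; rfl
    have := hin (b-a) (by omega)
    omega
  rcases Nat.lt_or_ge i j with h | h
  · exact key i j h hij'
  · exact key j i (by omega) hij'.symm





lemma even_fixed {α : Type*} [Fintype α] [DecidableEq α] (hcard : Fintype.card α % 2 = 0)
    (P : α → Prop) [DecidablePred P] (f : α → α)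
    (hf : ∀ a, ¬ P a → f (f a) = a ∧ ¬ P (f a) ∧ f a ≠ a) :
    Even (Set.ncard {a | P a}) := by
  classical
  let ψ : Function.End α := fun a => if P a then a else f a
  have hψa : ∀ a, ψ a = if P a then a else f a := fun _ => rfl
  have hψψ : ∀ a, ψ (ψ a) = a := by
    intro a
    by_cases h : P a
    · rw [hψa a, if_pos h, hψa a, if_pos h]
    · rw [hψa a, if_neg h, hψa (f a), if_neg (hf a h).2.1]
      exact (hf a h).1
  have hψ2 : ψ ^ 2 ^ 1 = 1 := by
    have h2 : (2:ℕ) ^ 1 = 2 := by norm_num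
    rw [h2, sq]
    funext a
    show ψ (ψ a) = a
    exact hψψ a
  have hmod := Equiv.Perm.card_fixedPoints_modEq (f := ψ) hψ2
  have hfixeq : Function.fixedPoints ψ = {a | P a} := by
    ext a
    simp only [Function.mem_fixedPoints, Function.IsFixedPt, Set.mem_setOf_eq, hψa]
    by_cases h : P a
    · exact iff_of_true (show ψ a = a by rw [hψa, if_pos h]) h
    · refine iff_of_false (fun hx => ?_) h; have hx' : ψ a = a := hx; rw [hψa, if_neg h] at hx'; exact (hf a h).2.2 hx'
  have h3 : Fintype.card (Function.fixedPoints ψ) % 2 = 0 := by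
    have h5 := hmod
    unfold Nat.ModEq at h5
    omega
  have h4 : Set.ncard {a | P a} = Fintype.card (Function.fixedPoints ψ) := by
    rw [← hfixeq, ← Nat.card_coe_set_eq, Nat.card_eq_fintype_card]
  rw [h4, Nat.even_iff]
  exact h3



end Stmt4Aux


open Stmt4Aux

/-- **Evenness of the number of left–right trajectories.** In the Lorentz mirror model on
the even-width cylinder `ℤ × (ℤ/2nℤ)` restricted to the strip `{0,…,N+1} × (ℤ/2nℤ)`,
for any fixed mirror configuration, the number of left–right trajectories is even. -/

theorem stmt4 (n N : ℕ) (hn : 0 < n) (hN : 0 < N)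
    (cfg : ℤ × ZMod (2*n) → Mirror) :
    Even (Set.ncard {y : ZMod (2*n) | LRat n N cfg y}) := by
  classical
  haveI : NeZero (2*n) := ⟨by omega⟩
  have hex : ∀ y : ZMod (2*n), ∃ k : ℕ, 1 ≤ k ∧
      ¬(1 ≤ X n cfg y k ∧ X n cfg y k ≤ (N:ℤ)) := exists_exit n N cfg hn
  set T : ZMod (2*n) → ℕ := fun y => Nat.find (hex y) with hTdef
  have hT1 : ∀ y, 1 ≤ T y := fun y => (Nat.find_spec (hex y)).1
  have hTout : ∀ y, ¬(1 ≤ X n cfg y (T y) ∧ X n cfg y (T y) ≤ (N:ℤ)) :=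
    fun y => (Nat.find_spec (hex y)).2
  have hTmin : ∀ y, ∀ i, 1 ≤ i → i < T y → 1 ≤ X n cfg y i ∧ X n cfg y i ≤ (N:ℤ) := by
    intro y i h1 h2
    by_contra hcon
    exact Nat.find_min (hex y) h2 ⟨h1, hcon⟩
  have hX1 : ∀ y, X n cfg y 1 = 1 := by
    intro y
    show (traj n cfg y 1).1.1 = 1
    rw [traj_succ]
    simp [stepC, traj, s0]
  have hT2 : ∀ y, 2 ≤ T y := by
    intro y
    have h1 := hT1 y
    rcases Nat.lt_or_ge (T y) 2 with h | h
    · exfalso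
      have he : T y = 1 := by omega
      have h2 := hTout y
      rw [he, hX1 y] at h2
      have : (0:ℤ) < N := by exact_mod_cast hN
      omega
    · exact h
  have hexit : ∀ y, (X n cfg y (T y) = 0 ∧ (traj n cfg y (T y - 1)).2 = (-1,0)) ∨
      (X n cfg y (T y) = (N:ℤ)+1 ∧ (traj n cfg y (T y - 1)).2 = (1,0)) := by
    intro y
    have hm : T y - 1 + 1 = T y := by have := hT1 y; omega
    have hXs := X_succ n cfg y (T y - 1)
    rw [hm] at hXs
    have hin := hTmin y (T y - 1) (by have := hT2 y; omega) (by have := hT1 y; omega)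
    have hout := hTout y
    rcases isDir_traj n cfg y (T y - 1) with h | h | h | h <;> rw [h] at hXs <;>
        norm_num at hXs
    · right; exact ⟨by omega, h⟩
    · left; exact ⟨by omega, h⟩
    · exfalso; omega
    · exfalso; omega
  have hLRiff : ∀ y, LRat n N cfg y ↔ X n cfg y (T y) = (N:ℤ)+1 := by
    intro y
    have hr : LRat n N cfg y ↔ ∃ k : ℕ, X n cfg y (k+1) = (N:ℤ)+1 ∧
        ∀ i : ℕ, 1 ≤ i → i ≤ k → 1 ≤ X n cfg y i ∧ X n cfg y i ≤ (N:ℤ) := Iff.rfl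
    rw [hr]
    constructor
    · rintro ⟨k, hk1, hk2⟩
      have hle : T y ≤ k+1 := by
        apply Nat.find_le
        refine ⟨by omega, ?_⟩
        rw [hk1]
        omega
      have hge : k+1 ≤ T y := by
        by_contra hcon
        push_neg at hcon
        have h1 : T y ≤ k := by omega
        exact hTout y (hk2 (T y) (hT1 y) h1)
      have he : T y = k + 1 := by omega
      rw [he]; exact hk1
    · intro hX
      refine ⟨T y - 1, ?_, ?_⟩
      · rw [Nat.sub_add_cancel (hT1 y)]; exact hX
      · intro i hi1 hi2
        exact hTmin y i hi1 (by have := hT1 y; omega)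
  have hφmain : ∀ y, X n cfg y (T y) = 0 →
      X n cfg ((traj n cfg y (T y)).1.2) (T ((traj n cfg y (T y)).1.2)) = 0 ∧
      (traj n cfg ((traj n cfg y (T y)).1.2)
        (T ((traj n cfg y (T y)).1.2))).1.2 = y ∧
      (traj n cfg y (T y)).1.2 ≠ y := by
    intro y hy
    set z := (traj n cfg y (T y)).1.2 with hzdef
    set m := T y - 1 with hmdef
    have hm : m + 1 = T y := by have := hT1 y; omega
    have hm1 : 1 ≤ m := by have := hT2 y; omega
    have hd : (traj n cfg y m).2 = (-1,0) := by
      rcases hexit y with ⟨_, h⟩ | ⟨h, _⟩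
      · exact h
      · exfalso; rw [hy] at h; omega
    have hXm : X n cfg y m = 1 := by
      have hXs := X_succ n cfg y m
      rw [hm, hy, hd] at hXs
      norm_num at hXs
      omega
    have hA : s0 n z = RR (2*n) (traj n cfg y m) := by
      have hz2 : z = (traj n cfg y (m+1)).1.2 := by rw [hzdef, hm]
      rw [hz2]
      exact claimA n cfg hXm hd
    have hB : ∀ i : ℕ, i ≤ m → traj n cfg z i = RR (2*n) (traj n cfg y (m - i)) :=
      fun i him => claimB n cfg hA him
    have hXz : ∀ i : ℕ, 1 ≤ i → i ≤ m → X n cfg z i = X n cfg y (m - i + 1) := by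
      intro i h1 h2
      have h3 := hB i h2
      have h4 : X n cfg z i = X n cfg y (m-i) + (traj n cfg y (m-i)).2.1 := by
        rw [X, h3]; rfl
      rw [h4, ← X_succ]
    have hstrip : ∀ i : ℕ, 1 ≤ i → i ≤ m →
        1 ≤ X n cfg z i ∧ X n cfg z i ≤ (N:ℤ) := by
      intro i h1 h2
      rw [hXz i h1 h2]
      exact hTmin y (m - i + 1) (by omega) (by omega)
    have hend : traj n cfg z m = RR (2*n) (s0 n y) := by
      have h5 := hB m le_rfl
      simpa [traj] using h5
    have hD := claimD n cfg hend
    have hTz : T z = m + 1 := by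
      rw [hTdef]
      apply (Nat.find_eq_iff (hex z)).mpr
      refine ⟨⟨by omega, ?_⟩, ?_⟩
      · have h7 : X n cfg z (m+1) = 0 := hD.1
        omega
      · intro j hj
        rcases Nat.eq_zero_or_pos j with h | h
        · subst h; simp
        · intro hcon
          exact hcon.2 (hstrip j h (by omega))
    refine ⟨?_, ?_, ?_⟩
    · rw [hTz]
      exact hD.1
    · rw [hTz]
      exact hD.2
    · intro heq
      rcases Nat.even_or_odd m with ⟨j, hj⟩ | ⟨j, hj⟩
      · have h5 := hB j (by omega)
        rw [heq] at h5
        have h6 : m - j = j := by omega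
        rw [h6] at h5
        exact noFixEven n (isDir_traj n cfg y j) h5
      · have h5 := hB j (by omega)
        rw [heq] at h5
        have h6 : m - j = j + 1 := by omega
        rw [h6, traj_succ] at h5
        exact noFixOdd n cfg (isDir_traj n cfg y j) h5
  apply even_fixed _ (fun y => LRat n N cfg y)
      (fun y => (traj n cfg y (T y)).1.2)
  · intro y hy
    have hy0 : X n cfg y (T y) = 0 := by
      rcases hexit y with ⟨h, _⟩ | ⟨h, _⟩
      · exact h
      · exact absurd ((hLRiff y).mpr h) hy
    obtain ⟨h1, h2, h3⟩ := hφmain y hy0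
    refine ⟨h2, ?_, h3⟩
    rw [hLRiff]
    intro hcon
    rw [h1] at hcon
    omega
  · rw [ZMod.card]; omega
end

section
/- On the cylinder ℤ × (ℤ/(2n+1)ℤ) of odd width, for any configuration of two-sided mirrors in the Lorentz mirror model, there exists an infinite (unbounded) light trajectory. -/
namespace MirrorAux

set_option linter.unusedTactic false
set_option linter.unreachableTactic false

/-- The four axis directions. -/
def Dir4 (d : ℤ × ℤ) : Prop :=
  d = (1, 0) ∨ d = (-1, 0) ∨ d = (0, 1) ∨ d = (0, -1)

lemma reflect_invol (m : Mirror) (d : ℤ × ℤ) : reflect m (reflect m d) = d := by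
  rcases m with _ | b
  · rfl
  · rcases b <;> simp [reflect]

lemma reflect_neg (m : Mirror) (d : ℤ × ℤ) : reflect m (-d) = -reflect m d := by
  rcases m with _ | b
  · rfl
  · rcases b <;> simp [reflect, Prod.ext_iff]

lemma reflect_dir4 (m : Mirror) {d : ℤ × ℤ} (h : Dir4 d) : Dir4 (reflect m d) := by
  rcases m with _ | b
  · exact h
  · rcases b <;> rcases h with rfl | rfl | rfl | rfl <;> simp [reflect, Dir4]

/-- A reflection is never a U-turn on an axis direction. -/
lemma reflect_ne_neg (m : Mirror) {d : ℤ × ℤ} (h : Dir4 d) : reflect m d ≠ -d := by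
  rcases m with _ | b
  · rcases h with rfl | rfl | rfl | rfl <;> simp [reflect, Prod.ext_iff] <;> omega
  · rcases b <;> rcases h with rfl | rfl | rfl | rfl <;>
      simp [reflect, Prod.ext_iff] <;> omega

variable {w : ℕ} (cfg : ℤ × ZMod w → Mirror)

/-- Explicit inverse of `stepC`. -/
def predC (s : (ℤ × ZMod w) × (ℤ × ℤ)) : (ℤ × ZMod w) × (ℤ × ℤ) :=
  ((s.1.1 - (reflect (cfg s.1) s.2).1, s.1.2 - ((reflect (cfg s.1) s.2).2 : ZMod w)),
    reflect (cfg s.1) s.2)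

lemma pred_step (s) : predC cfg (stepC w cfg s) = s := by
  obtain ⟨⟨x, y⟩, d⟩ := s
  simp only [stepC, predC, reflect_invol]
  simp

lemma step_inj : Function.Injective (stepC w cfg) :=
  Function.LeftInverse.injective (g := predC cfg) (pred_step cfg)

lemma dir4_iter (k : ℕ) (s) (h : Dir4 s.2) :
    Dir4 (((stepC w cfg)^[k] s).2) := by
  induction k with
  | zero => exact h
  | succ k ih =>
    rw [Function.iterate_succ_apply']
    exact reflect_dir4 _ ih

lemma step_x (s) : (stepC w cfg s).1.1 = s.1.1 + s.2.1 := rfl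

/-- Time reversal of a state. -/
def Rmap (s : (ℤ × ZMod w) × (ℤ × ℤ)) : (ℤ × ZMod w) × (ℤ × ℤ) :=
  ((s.1.1 + s.2.1, s.1.2 + (s.2.2 : ZMod w)), -s.2)

lemma Rmap_invol (s) : Rmap (w := w) (Rmap s) = s := by
  obtain ⟨⟨x, y⟩, d⟩ := s
  simp [Rmap]

lemma Rmap_ne (s : (ℤ × ZMod w) × (ℤ × ℤ)) (h : Dir4 s.2) : Rmap s ≠ s := by
  intro hc
  have h2 : -s.2 = s.2 := congrArg Prod.snd hc
  rcases h with h | h | h | h <;> rw [h] at h2 <;>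
    simp [Prod.ext_iff] at h2 <;> omega

/-- Conjugation relation: `step ∘ R ∘ step = R`. -/
lemma step_R_step (s) : stepC w cfg (Rmap (stepC w cfg s)) = Rmap s := by
  obtain ⟨⟨x, y⟩, d⟩ := s
  set v' : ℤ × ZMod w := (x + d.1, y + (d.2 : ZMod w)) with hv'
  set d' : ℤ × ℤ := reflect (cfg v') d with hd'
  have hvv : ((v'.1 + d'.1 + (-d').1 : ℤ),
      (v'.2 + (d'.2 : ZMod w) + (((-d').2 : ℤ) : ZMod w) : ZMod w)) = v' := by
    simp
  have h2 : stepC w cfg (Rmap (stepC w cfg ((x, y), d)))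
      = ((v'.1 + d'.1 + (-d').1,
          v'.2 + (d'.2 : ZMod w) + (((-d').2 : ℤ) : ZMod w)),
         reflect (cfg ((v'.1 + d'.1 + (-d').1,
          v'.2 + (d'.2 : ZMod w) + (((-d').2 : ℤ) : ZMod w)))) (-d')) := rfl
  rw [h2, hvv, hd', reflect_neg, reflect_invol]
  rfl

lemma step_R_iter (k : ℕ) (s) :
    (stepC w cfg)^[k] (Rmap ((stepC w cfg)^[k] s)) = Rmap s := by
  induction k generalizing s with
  | zero => rfl
  | succ k ih =>
    have h1 : (stepC w cfg)^[k+1] s = (stepC w cfg)^[k] (stepC w cfg s) :=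
      Function.iterate_succ_apply _ k s
    rw [h1, Function.iterate_succ_apply', ih (stepC w cfg s), step_R_step]

/-- Membership in the cut set `E`. -/
def InE (s : (ℤ × ZMod w) × (ℤ × ℤ)) : Prop :=
  (s.1.1 = 0 ∧ s.2 = ((1 : ℤ), (0 : ℤ))) ∨ (s.1.1 = 1 ∧ s.2 = (-1, 0))

lemma Rmap_InE {s} (h : InE (w := w) s) : InE (Rmap s) := by
  rcases h with ⟨hx, hd⟩ | ⟨hx, hd⟩
  · right
    constructor
    · show s.1.1 + s.2.1 = 1
      rw [hx, hd]
      norm_num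
    · show -s.2 = (-1, 0)
      rw [hd]
      simp [Prod.ext_iff]
  · left
    constructor
    · show s.1.1 + s.2.1 = 0
      rw [hx, hd]
      norm_num
    · show -s.2 = (1, 0)
      rw [hd]
      simp [Prod.ext_iff]

/-- A fixed-point-free involution forces even cardinality. -/
lemma even_card_of_fpf {α : Type*} [DecidableEq α] (g : α → α) :
    ∀ s : Finset α, (∀ x ∈ s, g x ∈ s) → (∀ x ∈ s, g (g x) = x) →
      (∀ x ∈ s, g x ≠ x) → Even s.card := by
  intro s
  induction s using Finset.strongInduction with
  | _ s ih =>
    intro hmap hinv hne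
    rcases s.eq_empty_or_nonempty with rfl | ⟨x, hx⟩
    · simp
    · have hgx : g x ∈ s := hmap x hx
      have hxne : g x ≠ x := hne x hx
      set s' := (s.erase x).erase (g x) with hs'
      have hmem' : ∀ y ∈ s', y ∈ s := fun y hy =>
        Finset.mem_of_mem_erase (Finset.mem_of_mem_erase hy)
      have hsub : s' ⊂ s := by
        refine Finset.ssubset_iff_of_subset (fun y hy => hmem' y hy) |>.mpr ?_
        exact ⟨x, hx, by simp [hs', Finset.mem_erase]⟩
      have h1 : ∀ y ∈ s', g y ∈ s' := by
        intro y hy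
        have hys := hmem' y hy
        have hyx : y ≠ x := Finset.ne_of_mem_erase (Finset.mem_of_mem_erase hy)
        have hygx : y ≠ g x := Finset.ne_of_mem_erase hy
        refine Finset.mem_erase.mpr ⟨?_, Finset.mem_erase.mpr ⟨?_, hmap y hys⟩⟩
        · intro h
          apply hyx
          have := congrArg g h
          rwa [hinv y hys, hinv x hx] at this
        · intro h
          apply hygx
          have := congrArg g h
          rwa [hinv y hys] at this
      have hE : Even s'.card :=
        ih s' hsub h1 (fun y hy => hinv y (hmem' y hy)) (fun y hy => hne y (hmem' y hy))
      have c1 : (s.erase x).card + 1 = s.card := Finset.card_erase_add_one hx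
      have c2 : s'.card + 1 = (s.erase x).card :=
        Finset.card_erase_add_one (Finset.mem_erase.mpr ⟨hxne, hgx⟩)
      have hc : s.card = s'.card + 2 := by omega
      rw [hc]
      exact hE.add (by norm_num)

/-- The main combinatorial contradiction: on a cylinder with odd circumference,
not all trajectories can be bounded. -/
lemma main_contra {w : ℕ} [NeZero w] (cfg : ℤ × ZMod w → Mirror)
    (hodd : ¬ Even w)
    (hbdd : ∀ s : (ℤ × ZMod w) × (ℤ × ℤ), Dir4 s.2 →
      ∃ M : ℤ, ∀ k : ℕ, |((stepC w cfg)^[k] s).1.1| ≤ M) : False := by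
  classical
  -- every axis state is periodic
  have hper : ∀ e : (ℤ × ZMod w) × (ℤ × ℤ), Dir4 e.2 →
      ∃ p, 0 < p ∧ (stepC w cfg)^[p] e = e := by
    intro e he
    obtain ⟨M, hM⟩ := hbdd e he
    have hfin : ((Set.Icc (-M) M ×ˢ (Set.univ : Set (ZMod w))) ×ˢ
        ({(1,0),(-1,0),(0,1),(0,-1)} : Set (ℤ × ℤ))).Finite :=
      (((Set.finite_Icc _ _).prod Set.finite_univ).prod (Set.toFinite _))
    have hmaps : Set.MapsTo (fun k : ℕ => (stepC w cfg)^[k] e) Set.univ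
        ((Set.Icc (-M) M ×ˢ (Set.univ : Set (ZMod w))) ×ˢ
          ({(1,0),(-1,0),(0,1),(0,-1)} : Set (ℤ × ℤ))) := by
      intro k _
      refine ⟨⟨?_, trivial⟩, ?_⟩
      · exact abs_le.mp (hM k)
      · have := dir4_iter cfg k e he
        rcases this with h | h | h | h <;> rw [h] <;> simp
    obtain ⟨a, -, b, -, hne, heq⟩ :=
      Set.Infinite.exists_ne_map_eq_of_mapsTo Set.infinite_univ hmaps hfin
    rcases hne.lt_or_gt with hlt | hlt
    · refine ⟨b - a, by omega, ?_⟩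
      have h1 : (stepC w cfg)^[a] ((stepC w cfg)^[b-a] e) = (stepC w cfg)^[a] e := by
        rw [← Function.iterate_add_apply, show a + (b - a) = b by omega]
        exact heq.symm
      exact (step_inj cfg).iterate a h1
    · refine ⟨a - b, by omega, ?_⟩
      have h1 : (stepC w cfg)^[b] ((stepC w cfg)^[a-b] e) = (stepC w cfg)^[b] e := by
        rw [← Function.iterate_add_apply, show b + (a - b) = a by omega]
        exact heq
      exact (step_inj cfg).iterate b h1
  -- the rightward cut states
  set e : ZMod w → (ℤ × ZMod w) × (ℤ × ℤ) :=
    fun y => (((0 : ℤ), y), ((1 : ℤ), (0 : ℤ))) with he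
  have he4 : ∀ y, Dir4 (e y).2 := fun y => Or.inl rfl
  have hexE : ∀ y, ∃ t, 0 < t ∧ InE ((stepC w cfg)^[t] (e y)) := by
    intro y
    obtain ⟨p, hp, hfp⟩ := hper (e y) (he4 y)
    exact ⟨p, hp, by rw [hfp]; exact Or.inl ⟨rfl, rfl⟩⟩
  set m : ZMod w → ℕ := fun y => Nat.find (hexE y) with hm
  have hmE : ∀ y, 0 < m y ∧ InE ((stepC w cfg)^[m y] (e y)) :=
    fun y => Nat.find_spec (hexE y)
  have hmin : ∀ y, ∀ t < m y, ¬(0 < t ∧ InE ((stepC w cfg)^[t] (e y))) :=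
    fun y t ht => Nat.find_min (hexE y) ht
  -- before first return, all x-coordinates are ≥ 1
  have hx_pos : ∀ y, ∀ t, 0 < t → t ≤ m y → 1 ≤ ((stepC w cfg)^[t] (e y)).1.1 := by
    intro y t
    induction t with
    | zero => omega
    | succ t ih =>
      intro _ hle
      have hstep : ((stepC w cfg)^[t+1] (e y)).1.1
          = ((stepC w cfg)^[t] (e y)).1.1 + ((stepC w cfg)^[t] (e y)).2.1 := by
        rw [Function.iterate_succ_apply']
        exact step_x cfg _
      rcases Nat.eq_zero_or_pos t with rfl | htpos
      · rw [hstep]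
        norm_num [he]
      · have hxt := ih htpos (le_trans (Nat.le_succ t) hle)
        have hd4 : Dir4 (((stepC w cfg)^[t] (e y)).2) := dir4_iter cfg t (e y) (he4 y)
        have htm : t < m y := by omega
        rcases hd4 with h | h | h | h
        · have hh : ((stepC w cfg)^[t] (e y)).2.1 = 1 := by rw [h]
          omega
        · by_cases hx1 : ((stepC w cfg)^[t] (e y)).1.1 = 1
          · exact absurd ⟨htpos, Or.inr ⟨hx1, h⟩⟩ (hmin y t htm)
          · have hh : ((stepC w cfg)^[t] (e y)).2.1 = -1 := by rw [h]
            omega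
        · have hh : ((stepC w cfg)^[t] (e y)).2.1 = 0 := by rw [h]
          omega
        · have hh : ((stepC w cfg)^[t] (e y)).2.1 = 0 := by rw [h]
          omega
  -- the first-return state is a leftward crossing
  have hform : ∀ y, ((stepC w cfg)^[m y] (e y)).1.1 = 1
      ∧ ((stepC w cfg)^[m y] (e y)).2 = (-1, 0) := by
    intro y
    have hx := hx_pos y (m y) (hmE y).1 le_rfl
    rcases (hmE y).2 with ⟨h0, -⟩ | ⟨h1, h2⟩
    · omega
    · exact ⟨h1, h2⟩
  set g : ZMod w → ZMod w := fun y => ((stepC w cfg)^[m y] (e y)).1.2 with hg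
  -- R of the first-return state is again a rightward cut state
  have hRe : ∀ y, Rmap ((stepC w cfg)^[m y] (e y)) = e (g y) := by
    intro y
    obtain ⟨h1, h2⟩ := hform y
    show ((((stepC w cfg)^[m y] (e y)).1.1 + ((stepC w cfg)^[m y] (e y)).2.1,
        ((stepC w cfg)^[m y] (e y)).1.2 + ((((stepC w cfg)^[m y] (e y)).2.2 : ℤ) : ZMod w)),
        -((stepC w cfg)^[m y] (e y)).2) = (((0 : ℤ), g y), ((1 : ℤ), (0 : ℤ)))
    rw [h1, h2]
    simp [Prod.ext_iff, hg]
  have hstepiter : ∀ (k : ℕ) s, (stepC w cfg)^[k] (Rmap ((stepC w cfg)^[k] s)) = Rmap s :=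
    step_R_iter cfg
  have hA : ∀ y, (stepC w cfg)^[m y] (e (g y)) = Rmap (e y) := by
    intro y
    rw [← hRe y]
    exact hstepiter (m y) (e y)
  have hmle : ∀ y, m (g y) = m y := by
    intro y
    have h1 : InE ((stepC w cfg)^[m y] (e (g y))) := by
      rw [hA y]
      exact Rmap_InE (Or.inl ⟨rfl, rfl⟩)
    have h2 : ∀ t, t < m y → ¬(0 < t ∧ InE ((stepC w cfg)^[t] (e (g y)))) := by
      rintro t ht ⟨htpos, htE⟩
      have hsplit : (stepC w cfg)^[m y] (e y)
          = (stepC w cfg)^[t] ((stepC w cfg)^[m y - t] (e y)) := by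
        rw [← Function.iterate_add_apply, show t + (m y - t) = m y by omega]
      have h3 : (stepC w cfg)^[t] (e (g y)) = Rmap ((stepC w cfg)^[m y - t] (e y)) := by
        rw [← hRe y, hsplit]
        exact hstepiter t ((stepC w cfg)^[m y - t] (e y))
      rw [h3] at htE
      have h4 : InE ((stepC w cfg)^[m y - t] (e y)) := by
        have h5 := Rmap_InE htE
        rwa [Rmap_invol] at h5
      exact hmin y (m y - t) (by omega) ⟨by omega, h4⟩
    show Nat.find (hexE (g y)) = m y
    rw [Nat.find_eq_iff]
    exact ⟨⟨(hmE y).1, h1⟩, h2⟩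
  have hgg : ∀ y, g (g y) = y := by
    intro y
    have h1 : (stepC w cfg)^[m (g y)] (e (g y)) = Rmap (e y) := by
      rw [hmle y]
      exact hA y
    have h2 : g (g y) = (Rmap (e y)).1.2 := by
      show ((stepC w cfg)^[m (g y)] (e (g y))).1.2 = (Rmap (e y)).1.2
      rw [h1]
    rw [h2]
    show y + ((0 : ℤ) : ZMod w) = y
    simp
  have hgne : ∀ y, g y ≠ y := by
    intro y hgy
    have hRmapE : (stepC w cfg)^[m y] (e y) = Rmap (e y) := by
      have h0 := hRe y
      rw [hgy] at h0
      calc (stepC w cfg)^[m y] (e y)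
          = Rmap (Rmap ((stepC w cfg)^[m y] (e y))) := (Rmap_invol _).symm
        _ = Rmap (e y) := by rw [h0]
    rcases Nat.even_or_odd (m y) with ⟨j, hj⟩ | ⟨j, hj⟩
    · -- even period: an R-fixed state would exist
      have h1 : (stepC w cfg)^[j] (Rmap ((stepC w cfg)^[j] (e y))) = Rmap (e y) :=
        hstepiter j (e y)
      have h2 : (stepC w cfg)^[m y] (e y) = (stepC w cfg)^[j] ((stepC w cfg)^[j] (e y)) := by
        rw [hj, Function.iterate_add_apply]
      have h3 : (stepC w cfg)^[j] (Rmap ((stepC w cfg)^[j] (e y)))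
          = (stepC w cfg)^[j] ((stepC w cfg)^[j] (e y)) := by
        rw [h1, ← hRmapE, h2]
      have h4 : Rmap ((stepC w cfg)^[j] (e y)) = (stepC w cfg)^[j] (e y) :=
        ((step_inj cfg).iterate j) h3
      exact Rmap_ne _ (dir4_iter cfg j _ (he4 y)) h4
    · -- odd period: a U-turn would exist
      have h1 : (stepC w cfg)^[j] (Rmap ((stepC w cfg)^[j] (e y))) = Rmap (e y) :=
        hstepiter j (e y)
      have h2 : (stepC w cfg)^[m y] (e y) = (stepC w cfg)^[j] ((stepC w cfg)^[j+1] (e y)) := by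
        rw [hj, show 2*j+1 = j + (j+1) by omega, Function.iterate_add_apply]
      have h3 : Rmap ((stepC w cfg)^[j] (e y)) = (stepC w cfg)^[j+1] (e y) := by
        apply (step_inj cfg).iterate j
        rw [h1, ← hRmapE, h2]
      have h4 : stepC w cfg ((stepC w cfg)^[j] (e y)) = Rmap ((stepC w cfg)^[j] (e y)) := by
        rw [h3]
        exact (Function.iterate_succ_apply' _ j _).symm
      have hd4 : Dir4 (((stepC w cfg)^[j] (e y)).2) := dir4_iter cfg j _ (he4 y)
      have h5 : (stepC w cfg ((stepC w cfg)^[j] (e y))).2 = -((stepC w cfg)^[j] (e y)).2 := by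
        rw [h4]
        rfl
      have h6 : (stepC w cfg ((stepC w cfg)^[j] (e y))).2
          = reflect (cfg ((stepC w cfg ((stepC w cfg)^[j] (e y))).1))
              (((stepC w cfg)^[j] (e y)).2) := rfl
      rw [h6] at h5
      exact reflect_ne_neg _ hd4 h5
  -- parity contradiction
  have heven : Even (Fintype.card (ZMod w)) := by
    rw [← Finset.card_univ]
    exact even_card_of_fpf g Finset.univ (fun x _ => Finset.mem_univ _)
      (fun x _ => hgg x) (fun x _ => hgne x)
  rw [ZMod.card] at heven
  exact hodd heven

end MirrorAux

/-- **Odd-width cylinders carry an infinite trajectory.** On the cylinder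
`ℤ × (ℤ/(2n+1)ℤ)` of odd width, for any mirror configuration of the Lorentz mirror
model there is an initial state (a vertex together with a unit direction) whose
light trajectory is unbounded. -/
theorem stmt5 (n : ℕ) (cfg : ℤ × ZMod (2*n+1) → Mirror) :
    ∃ s : (ℤ × ZMod (2*n+1)) × (ℤ × ℤ),
      (s.2 = (1, 0) ∨ s.2 = (-1, 0) ∨ s.2 = (0, 1) ∨ s.2 = (0, -1)) ∧
      ∀ M : ℕ, ∃ k : ℕ, (M : ℤ) < |((stepC (2*n+1) cfg)^[k] s).1.1| := by
  by_contra h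
  push_neg at h
  haveI : NeZero (2*n+1) := ⟨by omega⟩
  apply MirrorAux.main_contra cfg ?_ ?_
  · rintro ⟨k, hk⟩
    omega
  · intro s hs
    obtain ⟨M, hM⟩ := h s hs
    exact ⟨(M : ℤ), hM⟩
end
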